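/- Let P be a 2-torsion free prime unital ring with a nontrivial idempotent e₁, set e₂ = 1 − e₁, and let D : P → P be a commuting Jordan left centralizer such that e₁ D(m) e₂ = 0 for all m ∈ e₁Pe₂. Then D(t) = 0 for every t ∈ e₂Pe₁. -/

import Mathlib

/-- Lemma 3.3: D(t) = 0 for all t ∈ e₂Pe₁. -/
theorem commuting_jordan_left_centralizer_twentyone {P : Type*} [Ring P]
    (htf : ∀ p : P, 2 • p = 0 → p = 0)
    (hprime : ∀ a b : P, (∀ x : P, a * x * b = 0) → a = 0 ∨ b = 0)
    (e₁ : P) (he : e₁ * e₁ = e₁) (he0 : e₁ ≠ 0) (he1 : e₁ ≠ 1)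
    (D : P → P)
    (hadd : ∀ x y : P, D (x + y) = D x + D y)
    (hJ : ∀ p : P, D (p ^ 2) = D p * p)
    (hC : ∀ p : P, D p * p = p * D p)
    (h12 : ∀ m : P, (∃ x : P, m = e₁ * x * (1 - e₁)) → e₁ * D m * (1 - e₁) = 0) :
    ∀ t : P, (∃ x : P, t = (1 - e₁) * x * e₁) → D t = 0 := by
  set e₂ : P := 1 - e₁ with he₂def
  have h12e : e₁ * e₂ = 0 := by rw [he₂def, mul_sub, mul_one, he, sub_self]
  have h21e : e₂ * e₁ = 0 := by rw [he₂def, sub_mul, one_mul, he, sub_self]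
  have he₂ : e₂ * e₂ = e₂ := by
    rw [he₂def, sub_mul, one_mul, mul_sub, mul_one, he, sub_self, sub_zero]
  have he₂0 : e₂ ≠ 0 := by
    intro h
    exact he1 (sub_eq_zero.mp h).symm
  have hsum : e₁ + e₂ = 1 := by rw [he₂def]; abel
  have h0 : D 0 = 0 := by
    have h := hadd 0 0
    rw [add_zero] at h
    exact (left_eq_add.mp h)
  -- linearized commuting relation
  have key : ∀ x y : P, D x * y + D y * x = x * D y + y * D x := by
    intro x y
    have hxy := hC (x + y)
    rw [hadd] at hxy
    have e : (D x * y + D y * x) - (x * D y + y * D x) =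
        ((D x + D y) * (x + y) - (x + y) * (D x + D y))
          - (D x * x - x * D x) - (D y * y - y * D y) := by noncomm_ring
    rw [hxy, hC x, hC y] at e
    simp only [sub_self, sub_zero] at e
    exact sub_eq_zero.mp e
  -- facts for idempotents and square-zero elements
  have idem : ∀ q : P, q * q = q → D q * q = D q ∧ q * D q = D q := by
    intro q hq
    have h := hJ q
    rw [sq, hq] at h
    exact ⟨h.symm, by rw [← hC]; exact h.symm⟩
  have sqzero : ∀ s : P, s * s = 0 → D s * s = 0 ∧ s * D s = 0 := by
    intro s hs
    have h := hJ s
    rw [sq, hs, h0] at h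
    exact ⟨h.symm, by rw [← hC]; exact h.symm⟩
  have hDe : D e₁ * e₁ = D e₁ := (idem e₁ he).1
  have hDe' : e₁ * D e₁ = D e₁ := (idem e₁ he).2
  -- main facts about m = e₁ * y * e₂
  have mmain : ∀ y : P, e₁ * D (e₁ * y * e₂) = D (e₁ * y * e₂) ∧
      D (e₁ * y * e₂) * e₂ = 0 ∧ D e₁ * (e₁ * y * e₂) = 0 := by
    intro y
    set m := e₁ * y * e₂ with hm
    have hme : e₁ * m = m := by
      rw [hm, show e₁ * (e₁ * y * e₂) = (e₁ * e₁) * y * e₂ from by noncomm_ring, he]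
    have hme1 : m * e₁ = 0 := by
      rw [hm, show e₁ * y * e₂ * e₁ = e₁ * y * (e₂ * e₁) from by noncomm_ring, h21e,
        mul_zero]
    have hme2 : m * e₂ = m := by
      rw [hm, show e₁ * y * e₂ * e₂ = e₁ * y * (e₂ * e₂) from by noncomm_ring, he₂]
    have hm2 : m * m = 0 := by
      rw [hm, show e₁ * y * e₂ * (e₁ * y * e₂) = e₁ * y * (e₂ * e₁) * y * e₂ from by
        noncomm_ring, h21e, mul_zero, zero_mul, zero_mul]
    have hDm0 := sqzero m hm2
    have hq : (e₁ + m) * (e₁ + m) = e₁ + m := by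
      rw [show (e₁ + m) * (e₁ + m) = e₁ * e₁ + e₁ * m + m * e₁ + m * m from by
        noncomm_ring, he, hme, hme1, hm2, add_zero, add_zero]
    have hDq1 : (D e₁ + D m) * (e₁ + m) = D e₁ + D m := by
      rw [← hadd]; exact (idem _ hq).1
    have hDq2 : (e₁ + m) * (D e₁ + D m) = D e₁ + D m := by
      rw [← hadd]; exact (idem _ hq).2
    have hA : D e₁ * m + D m * e₁ = D m := by
      rw [show (D e₁ + D m) * (e₁ + m)
          = D e₁ * e₁ + (D e₁ * m + D m * e₁) + D m * m from by noncomm_ring,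
        hDe, hDm0.1, add_zero] at hDq1
      exact add_left_cancel hDq1
    have hB : e₁ * D m + m * D e₁ = D m := by
      rw [show (e₁ + m) * (D e₁ + D m)
          = e₁ * D e₁ + (e₁ * D m + m * D e₁) + m * D m from by noncomm_ring,
        hDe', hDm0.2, add_zero] at hDq2
      exact add_left_cancel hDq2
    have hmDe : m * D e₁ = 0 := by
      have h := congrArg (fun z => e₁ * z) hB
      rw [show e₁ * (e₁ * D m + m * D e₁) = (e₁ * e₁) * D m + (e₁ * m) * D e₁ from by
        noncomm_ring, he, hme] at h
      -- h : e₁ * D m + m * D e₁ = e₁ * D m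
      exact left_eq_add.mp h.symm
    have hDm1 : e₁ * D m = D m := by
      rw [hmDe, add_zero] at hB; exact hB
    have hDmA : D e₁ * m = D m * e₂ := by
      have h := congrArg (fun z => z * e₂) hA
      rw [show (D e₁ * m + D m * e₁) * e₂
          = D e₁ * (m * e₂) + D m * (e₁ * e₂) from by noncomm_ring,
        hme2, h12e, mul_zero, add_zero] at h
      exact h
    have hDme2 : D m * e₂ = 0 := by
      have h2 := h12 m ⟨y, hm⟩
      rw [show e₁ * D m * e₂ = (e₁ * D m) * e₂ from rfl, hDm1] at h2
      exact h2
    exact ⟨hDm1, hDme2, by rw [hDmA, hDme2]⟩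
  -- D e₁ = 0
  have hDe0 : D e₁ = 0 := by
    have hkey : ∀ y : P, D e₁ * y * e₂ = 0 := by
      intro y
      have h := (mmain y).2.2
      calc D e₁ * y * e₂ = D e₁ * (e₁ * y * e₂) := by
            conv_lhs => rw [← hDe]
            noncomm_ring
        _ = 0 := h
    rcases hprime (D e₁) e₂ hkey with h | h
    · exact h
    · exact absurd h he₂0
  -- now the main statement
  rintro t ⟨x, ht⟩
  have hte : t * e₁ = t := by
    rw [ht, show e₂ * x * e₁ * e₁ = e₂ * x * (e₁ * e₁) from by noncomm_ring, he]
  have het : e₁ * t = 0 := by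
    rw [ht, show e₁ * (e₂ * x * e₁) = (e₁ * e₂) * x * e₁ from by noncomm_ring, h12e,
      zero_mul, zero_mul]
  have ht2 : t * t = 0 := by
    rw [ht, show e₂ * x * e₁ * (e₂ * x * e₁) = e₂ * x * (e₁ * e₂) * x * e₁ from by
      noncomm_ring, h12e, mul_zero, zero_mul, zero_mul]
  have hDt0 := sqzero t ht2
  have hp : (e₁ + t) * (e₁ + t) = e₁ + t := by
    rw [show (e₁ + t) * (e₁ + t) = e₁ * e₁ + e₁ * t + t * e₁ + t * t from by
      noncomm_ring, he, het, hte, ht2, add_zero, add_zero]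
  have hDp : D (e₁ + t) = D t := by rw [hadd, hDe0, zero_add]
  have hDt1 : D t * e₁ = D t := by
    have h := (idem _ hp).1
    rw [hDp, mul_add, hDt0.1, add_zero] at h
    exact h
  have hDt2 : e₁ * D t = D t := by
    have h := (idem _ hp).2
    rw [hDp, add_mul, hDt0.2, add_zero] at h
    exact h
  have hkey : ∀ y : P, D t * y * e₂ = 0 := by
    intro y
    set m := e₁ * y * e₂ with hm
    obtain ⟨hDm1, hDme2, -⟩ := mmain y
    rw [← hm] at hDm1 hDme2
    have hDme1 : D m * e₁ = D m := by
      have h : D m * (e₁ + e₂) = D m := by rw [hsum, mul_one]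
      rw [mul_add, hDme2, add_zero] at h
      exact h
    have hDmt : D m * t = 0 := by
      rw [← hDme1, ht, show D m * e₁ * (e₂ * x * e₁) = D m * (e₁ * e₂) * x * e₁ from by
        noncomm_ring, h12e, mul_zero, zero_mul, zero_mul]
    have hmDt : m * D t = 0 := by
      rw [← hDt2, hm, show e₁ * y * e₂ * (e₁ * D t) = e₁ * y * (e₂ * e₁) * D t from by
        noncomm_ring, h21e, mul_zero, zero_mul]
    have h := key t m
    rw [hDmt, add_zero, hmDt, add_zero] at h
    -- h : D t * m = t * D m
    have h2 : D t * m = 0 := by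
      have h3 : e₁ * (D t * m) = e₁ * (t * D m) := congrArg (fun z => e₁ * z) h
      rw [show e₁ * (D t * m) = (e₁ * D t) * m from by noncomm_ring, hDt2,
        show e₁ * (t * D m) = (e₁ * t) * D m from by noncomm_ring, het, zero_mul] at h3
      exact h3
    calc D t * y * e₂ = D t * (e₁ * y * e₂) := by
          conv_lhs => rw [← hDt1]
          noncomm_ring
      _ = 0 := h2
  rcases hprime (D t) e₂ hkey with h | h
  · exact h
  · exact absurd h he₂0
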